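/- Assume (A.1)-(A.3) and that M is irreducible. If ν ≠ 0 is a finite Borel measure on X with L_M* ν = λν for some λ > 0, then the support of ν equals X_M. -/

import Mathlib

open Filter MeasureTheory Topology
open scoped ENNReal NNReal BigOperators

namespace TMS

variable {S : Type*}

/-- prepend a symbol to a one-sided sequence -/
def cons (a : S) (ω : ℕ → S) : ℕ → S
  | 0 => a
  | n + 1 => ω n

/-- the shift transformation -/
def shift (ω : ℕ → S) : ℕ → S := fun n => ω (n + 1)

/-- the (one-sided) topological Markov shift with transition matrix `A` -/
def markovShift (A : S → S → Prop) : Set (ℕ → S) := {ω | ∀ n, A (ω n) (ω (n + 1))}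

/-- the cylinder set of a word of length `n`, inside `X` -/
def cylW (X : Set (ℕ → S)) (n : ℕ) (w : Fin n → S) : Set (ℕ → S) :=
  {ω | ω ∈ X ∧ ∀ i : Fin n, ω i = w i}

/-- the cylinder set of a single symbol, inside `X` -/
def cyl1 (X : Set (ℕ → S)) (s : S) : Set (ℕ → S) := {ω | ω ∈ X ∧ ω 0 = s}

/-- Birkhoff sum `S_n φ` -/
noncomputable def birkhoff (φ : (ℕ → S) → ℝ) (n : ℕ) (ω : ℕ → S) : ℝ :=
  ∑ i ∈ Finset.range n, φ (shift^[i] ω)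

open Classical in
/-- the metric `d_θ` -/
noncomputable def dtheta (θ : ℝ) (ω υ : ℕ → S) : ℝ :=
  if ω = υ then 0 else θ ^ sInf {n | ω n ≠ υ n}

/-- supremum norm over `X` -/
noncomputable def supNorm (X : Set (ℕ → S)) (f : (ℕ → S) → ℝ) : ℝ :=
  sSup ((fun ω => |f ω|) '' X)

/-- `C` is a bound witnessing `[f]_k ≤ C`, i.e. `var_n f ≤ C θ^n` for all `n ≥ k`. -/
def LipBound (X : Set (ℕ → S)) (θ : ℝ) (k : ℕ) (f : (ℕ → S) → ℝ) (C : ℝ) : Prop :=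
  ∀ n, k ≤ n → ∀ ω, ω ∈ X → ∀ υ, υ ∈ X → (∀ i, i < n → ω i = υ i) →
    |f ω - f υ| ≤ C * θ ^ n

/-- the seminorm `[f]_k` -/
noncomputable def lipSemi (X : Set (ℕ → S)) (θ : ℝ) (k : ℕ) (f : (ℕ → S) → ℝ) : ℝ :=
  sInf {C | 0 ≤ C ∧ LipBound X θ k f C}

/-- the norm `‖f‖_k = ‖f‖_∞ + [f]_k` -/
noncomputable def normK (X : Set (ℕ → S)) (θ : ℝ) (k : ℕ) (f : (ℕ → S) → ℝ) : ℝ :=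
  supNorm X f + lipSemi X θ k f

/-- `φ` is summable: `Σ_{s : [s] ≠ ∅} exp (sup_{[s]} φ) < ∞` -/
def SummableOn (X : Set (ℕ → S)) (φ : (ℕ → S) → ℝ) : Prop :=
  (∀ s : S, BddAbove (φ '' cyl1 X s)) ∧
    Summable (fun s : {s : S // (cyl1 X s).Nonempty} => Real.exp (sSup (φ '' cyl1 X s.1)))

/-- finite irreducibility of a transition matrix -/
def FinitelyIrreducible (A : S → S → Prop) : Prop :=
  ∃ F : Finset (List S), ∀ a b : S, ∃ w ∈ F, List.Chain' A (a :: (w ++ [b]))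

/-- `X` contains a periodic point of the shift -/
def HasPeriodicPoint (X : Set (ℕ → S)) : Prop :=
  ∃ ω, ω ∈ X ∧ ∃ m, 0 < m ∧ shift^[m] ω = ω

/-- the Ruelle transfer operator `L_M` associated to `M` and the potential `φ` -/
noncomputable def transfer (M : S → S → Prop) (φ : (ℕ → S) → ℝ)
    (f : (ℕ → S) → ℝ) : (ℕ → S) → ℝ :=
  fun ω => ∑' a : {a : S // M a (ω 0)}, Real.exp (φ (cons a ω)) * f (cons a ω)

section Top

variable [TopologicalSpace S]

/-- the cone `Λ^k_c` -/
def cone (X : Set (ℕ → S)) (θ : ℝ) (k : ℕ) (c : ℝ) : Set ((ℕ → S) → ℝ) :=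
  {f | ContinuousOn f X ∧ (∀ ω ∈ X, 0 ≤ f ω) ∧
    ∀ ω ∈ X, ∀ υ ∈ X, (∀ i, i < k → ω i = υ i) →
      f ω ≤ Real.exp (c * dtheta θ ω υ) * f υ}

/-- the space `C_b(X)` of bounded continuous functions -/
def Cb (X : Set (ℕ → S)) : Set ((ℕ → S) → ℝ) :=
  {f | ContinuousOn f X ∧ BddAbove ((fun ω => |f ω|) '' X)}

/-- the space `F^k_b(X)` of bounded weak-Lipschitz functions -/
def Fkb (X : Set (ℕ → S)) (θ : ℝ) (k : ℕ) : Set ((ℕ → S) → ℝ) :=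
  {f | f ∈ Cb X ∧ ∃ C, LipBound X θ k f C}

end Top

/-- operator norm of `L` on the space `F` with norm `N` -/
noncomputable def opNorm (N : ((ℕ → S) → ℝ) → ℝ) (F : Set ((ℕ → S) → ℝ))
    (L : ((ℕ → S) → ℝ) → (ℕ → S) → ℝ) : ℝ :=
  sSup {r | ∃ f ∈ F, N f ≤ 1 ∧ r = N (L f)}

/-- spectral radius of `L` on `(F, N)` via the Gelfand formula -/
noncomputable def specRad (N : ((ℕ → S) → ℝ) → ℝ) (F : Set ((ℕ → S) → ℝ))
    (L : ((ℕ → S) → ℝ) → (ℕ → S) → ℝ) : ℝ :=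
  Filter.limsup (fun n : ℕ => (opNorm N F (L^[n])) ^ ((1 : ℝ) / n)) Filter.atTop

/-- the `n`-th partition function `Σ_{w ∈ Sⁿ, [w] ≠ ∅} exp (sup_{[w]} S_n φ)` -/
noncomputable def partition (X : Set (ℕ → S)) (φ : (ℕ → S) → ℝ) (n : ℕ) : ℝ≥0∞ :=
  ∑' w : {w : Fin n → S // (cylW X n w).Nonempty},
    ENNReal.ofReal (Real.exp (sSup (birkhoff φ n '' cylW X n w.1)))

/-- `P` is the topological pressure of `φ` on `X` -/
def IsPressure (X : Set (ℕ → S)) (φ : (ℕ → S) → ℝ) (P : ℝ) : Prop :=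
  Filter.Tendsto (fun n : ℕ => Real.log (partition X φ n).toReal / (n : ℝ))
    Filter.atTop (nhds P)

/-- there is an `M`-path from `a` to `b` (of length at least one) -/
def reaches (M : S → S → Prop) (a b : S) : Prop :=
  ∃ l : List S, List.Chain M a (l ++ [b])

/-- communication relation `a ↔ b` -/
def comm (M : S → S → Prop) (a b : S) : Prop :=
  a = b ∨ (reaches M a b ∧ reaches M b a)

/-- the submatrix of `M` indexed by `T` -/
def restrictM (M : S → S → Prop) (T : Set S) : S → S → Prop :=
  fun a b => M a b ∧ a ∈ T ∧ b ∈ T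

/-- support of a Borel measure -/
def msupport [TopologicalSpace S] [MeasurableSpace S] (ν : Measure (ℕ → S)) :
    Set (ℕ → S) :=
  {ω | ∀ U : Set (ℕ → S), IsOpen U → ω ∈ U → 0 < ν U}

end TMS

section Stmt9Aux

private lemma stmt9_chain_to_fun {S : Type*} (M : S → S → Prop) :
    ∀ (l : List S) (a b : S), List.Chain M a (l ++ [b]) →
      ∃ (P : ℕ) (q : ℕ → S), 0 < P ∧ q 0 = a ∧ q P = b ∧ ∀ i < P, M (q i) (q (i + 1)) := by
  intro l
  induction l with
  | nil =>
    intro a b h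
    rw [List.nil_append, List.Chain, List.isChain_cons_cons] at h
    refine ⟨1, fun i => if i = 0 then a else b, one_pos, by simp, by simp, ?_⟩
    intro i hi
    have : i = 0 := by omega
    subst this
    simpa using h.1
  | cons x xs ih =>
    intro a b h
    rw [List.cons_append, List.Chain, List.isChain_cons_cons] at h
    obtain ⟨P, q, hP, hq0, hqP, hqc⟩ := ih x b h.2
    refine ⟨P + 1, fun i => if i = 0 then a else q (i - 1), by omega, by simp, by simp [hqP], ?_⟩
    intro i hi
    rcases Nat.eq_zero_or_pos i with h0 | h0
    · subst h0
      simpa [hq0] using h.1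
    · have hlt : i - 1 < P := by omega
      have hh := hqc (i - 1) hlt
      rw [Nat.sub_add_cancel h0] at hh
      have h1 : ¬ (i = 0) := by omega
      have h2 : ¬ (i + 1 = 0) := by omega
      simp only [if_neg h1, if_neg h2, Nat.add_sub_cancel]
      exact hh

private lemma stmt9_splice {S : Type*} (M : S → S → Prop) (x : ℕ → S) (n : ℕ) (hn : 0 < n)
    (hx : ∀ i, i + 1 < n → M (x i) (x (i + 1)))
    (P : ℕ) (q : ℕ → S) (hP : 0 < P) (hq0 : q 0 = x (n - 1))
    (hqc : ∀ i < P, M (q i) (q (i + 1)))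
    (y : ℕ → S) (hy : ∀ i, M (y i) (y (i + 1))) (hqP : q P = y 0) :
    ∃ ξ : ℕ → S, (∀ i < n, ξ i = x i) ∧ (∀ i, M (ξ i) (ξ (i + 1))) ∧
      (∀ i, ξ (n - 1 + P + i) = y i) := by
  classical
  set ξ : ℕ → S := fun i =>
    if i < n then x i else if i < n - 1 + P then q (i - (n - 1)) else y (i - (n - 1) - P)
    with hξ
  have hpre : ∀ i < n, ξ i = x i := by
    intro i hi
    simp only [hξ, if_pos hi]
  have hmid : ∀ t, t ≤ P → ξ (n - 1 + t) = q t := by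
    intro t ht
    by_cases h1 : n - 1 + t < n
    · have ht0 : t = 0 := by omega
      subst ht0
      simp only [hξ, Nat.add_zero]
      rw [if_pos (show n - 1 < n by omega), hq0]
    · by_cases h2 : n - 1 + t < n - 1 + P
      · simp only [hξ, if_neg h1, if_pos h2]
        congr 1
        omega
      · have htP : t = P := by omega
        simp only [hξ, if_neg h1, if_neg h2]
        have he : n - 1 + t - (n - 1) - P = 0 := by omega
        rw [he, htP, hqP]
  have htail : ∀ s, ξ (n - 1 + P + s) = y s := by
    intro s
    rcases Nat.eq_zero_or_pos s with h0 | h0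
    · subst h0
      rw [Nat.add_zero, hmid P le_rfl, hqP]
    · have h1 : ¬ (n - 1 + P + s < n) := by omega
      have h2 : ¬ (n - 1 + P + s < n - 1 + P) := by omega
      simp only [hξ, if_neg h1, if_neg h2]
      congr 1
      omega
  have hchain : ∀ i, M (ξ i) (ξ (i + 1)) := by
    intro i
    by_cases hi : i + 1 < n
    · rw [hpre i (by omega), hpre (i + 1) hi]
      exact hx i hi
    · have hin : n - 1 ≤ i := by omega
      by_cases htP : i - (n - 1) < P
      · have e1 : ξ i = q (i - (n - 1)) := by
          have h : n - 1 + (i - (n - 1)) = i := by omega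
          have hh := hmid (i - (n - 1)) (le_of_lt htP)
          rwa [h] at hh
        have e2 : ξ (i + 1) = q (i - (n - 1) + 1) := by
          have h : n - 1 + (i - (n - 1) + 1) = i + 1 := by omega
          have hh := hmid (i - (n - 1) + 1) htP
          rwa [h] at hh
        rw [e1, e2]
        exact hqc _ htP
      · have e1 : ξ i = y (i - (n - 1) - P) := by
          have h : n - 1 + P + (i - (n - 1) - P) = i := by omega
          have hh := htail (i - (n - 1) - P)
          rwa [h] at hh
        have e2 : ξ (i + 1) = y (i - (n - 1) - P + 1) := by
          have h : n - 1 + P + (i - (n - 1) - P + 1) = i + 1 := by omega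
          have hh := htail (i - (n - 1) - P + 1)
          rwa [h] at hh
        rw [e1, e2]
        exact hy _
  exact ⟨ξ, hpre, hchain, htail⟩

end Stmt9Aux

/-- under (A.1)-(A.3) and irreducibility of `M`, any nonzero finite
Borel measure `ν` with `L_M* ν = λν`, `λ > 0`, has support exactly `X_M`. -/
theorem stmt9 {S : Type*} [Countable S] [TopologicalSpace S] [DiscreteTopology S]
    [MeasurableSpace S]
    (A M : S → S → Prop) (S0 : Set S) (hMS0 : ∀ a b, M a b → a ∈ S0 ∧ b ∈ S0)
    (hMA : ∀ a b, M a b → A a b) (hA : TMS.FinitelyIrreducible A)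
    (hirr : ∀ a ∈ S0, ∀ b ∈ S0, TMS.reaches M a b)
    (θ : ℝ) (hθ0 : 0 < θ) (hθ1 : θ < 1) (k : ℕ) (hk : 1 ≤ k)
    (φ : (ℕ → S) → ℝ) (hφ : TMS.SummableOn (TMS.markovShift A) φ)
    (hφlip : ∃ C, TMS.LipBound (TMS.markovShift A) θ (k + 1) φ C)
    (hper : TMS.HasPeriodicPoint (TMS.markovShift M))
    (ν : Measure (ℕ → S)) [IsFiniteMeasure ν] (hν0 : ν ≠ 0)
    (hνX : ν (TMS.markovShift A)ᶜ = 0)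
    (lam : ℝ) (hlam : 0 < lam)
    (heig : ∀ f ∈ TMS.Cb (TMS.markovShift A),
      ∫ ω, TMS.transfer M φ f ω ∂ν = lam * ∫ ω, f ω ∂ν) :
    TMS.msupport ν = TMS.markovShift M := by
  classical
  -- basic facts
  have hcons0 : ∀ (a : S) (υ : ℕ → S), TMS.cons a υ 0 = a := fun a υ => rfl
  have hconsS : ∀ (a : S) (υ : ℕ → S) (n : ℕ), TMS.cons a υ (n + 1) = υ n := fun a υ n => rfl
  have hconsX : ∀ (b : S) (υ : ℕ → S), υ ∈ TMS.markovShift A → A b (υ 0) →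
      TMS.cons b υ ∈ TMS.markovShift A := by
    intro b υ hυ hb n
    cases n with
    | zero => exact hb
    | succ n => exact hυ n
  have hm : 0 < (ν Set.univ).toReal := by
    apply ENNReal.toReal_pos
    · simpa [Measure.measure_univ_eq_zero] using hν0
    · exact measure_ne_top ν _
  set m := (ν Set.univ).toReal with hmdef
  have h1Cb : (fun _ : ℕ → S => (1 : ℝ)) ∈ TMS.Cb (TMS.markovShift A) := by
    refine ⟨continuousOn_const, ⟨1, ?_⟩⟩
    rintro x ⟨υ, -, rfl⟩
    simp
  have hint1 : ∫ _ω, (1 : ℝ) ∂ν = m := by simp [hmdef]; rfl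
  have hintL1 : ∫ ω, TMS.transfer M φ (fun _ => (1 : ℝ)) ω ∂ν = lam * m := by
    rw [heig _ h1Cb, hint1]
  have hL1int : Integrable (TMS.transfer M φ (fun _ => (1 : ℝ))) ν := by
    by_contra hc
    have hpos := mul_pos hlam hm
    rw [integral_undef hc] at hintL1
    linarith
  -- the Lipschitz constant
  obtain ⟨C₀, hC₀⟩ := hφlip
  set C := max C₀ 0 with hCdef
  have hC0 : 0 ≤ C := le_max_right _ _
  have hC : ∀ n, k + 1 ≤ n → ∀ ω ∈ TMS.markovShift A, ∀ υ ∈ TMS.markovShift A,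
      (∀ i, i < n → ω i = υ i) → |φ ω - φ υ| ≤ C * θ ^ n := by
    intro n hn ω hω υ hυ hag
    calc |φ ω - φ υ| ≤ C₀ * θ ^ n := hC₀ n hn ω hω υ hυ hag
    _ ≤ C * θ ^ n := mul_le_mul_of_nonneg_right (le_max_left _ _) (pow_nonneg hθ0.le n)
  -- continuity of φ on X
  have hφC : ContinuousOn φ (TMS.markovShift A) := by
    intro ω hω
    show Filter.Tendsto φ (nhdsWithin ω (TMS.markovShift A)) (nhds (φ ω))
    rw [Metric.tendsto_nhds]
    intro ε hε
    obtain ⟨n₀, hn₀⟩ := exists_pow_lt_of_lt_one (x := ε / (C + 1)) (by positivity) hθ1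
    set n := max n₀ (k + 1) with hndef
    have hθn : C * θ ^ n < ε := by
      have h1 : θ ^ n ≤ θ ^ n₀ := pow_le_pow_of_le_one hθ0.le hθ1.le (le_max_left _ _)
      have h2 : C * θ ^ n ≤ (C + 1) * θ ^ n₀ := by
        nlinarith [pow_nonneg hθ0.le n, pow_nonneg hθ0.le n₀]
      have h3 : (C + 1) * θ ^ n₀ < (C + 1) * (ε / (C + 1)) :=
        mul_lt_mul_of_pos_left hn₀ (by positivity)
      rw [mul_div_cancel₀ _ (by positivity : (C + 1 : ℝ) ≠ 0)] at h3
      linarith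
    have hV : {υ : ℕ → S | ∀ i < n, υ i = ω i} ∈ nhdsWithin ω (TMS.markovShift A) := by
      apply nhdsWithin_le_nhds
      apply IsOpen.mem_nhds
      · have hEq : {υ : ℕ → S | ∀ i < n, υ i = ω i}
            = Set.pi (↑(Finset.range n)) (fun i => {ω i}) := by
          ext υ
          simp [Set.mem_pi]
        rw [hEq]
        exact isOpen_set_pi (Finset.finite_toSet _) (fun a _ => isOpen_discrete _)
      · intro i _
        rfl
    filter_upwards [hV, self_mem_nhdsWithin] with υ hυV hυX
    rw [Real.dist_eq]
    calc |φ υ - φ ω| ≤ C * θ ^ n := hC n (le_max_right _ _) υ hυX ω hω hυV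
    _ < ε := hθn
  -- summability of the transfer series on X
  obtain ⟨hφbdd, hφsum⟩ := hφ
  have hsum : ∀ υ ∈ TMS.markovShift A,
      Summable (fun b : {b : S // M b (υ 0)} => Real.exp (φ (TMS.cons (b : S) υ))) := by
    intro υ hυ
    have hinj : Function.Injective
        (fun b : {b : S // M b (υ 0)} =>
          (⟨b.1, ⟨TMS.cons b.1 υ, hconsX b.1 υ hυ (hMA _ _ b.2), rfl⟩⟩ :
            {s : S // (TMS.cyl1 (TMS.markovShift A) s).Nonempty})) := by
      intro b b' h
      simp only [Subtype.mk.injEq] at h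
      exact Subtype.ext (congrArg (fun x : {s : S // (TMS.cyl1 (TMS.markovShift A) s).Nonempty} => x.1) h)
    have h1 := hφsum.comp_injective hinj
    apply Summable.of_nonneg_of_le (fun b => (Real.exp_pos _).le) _ h1
    intro b
    apply Real.exp_le_exp.2
    exact le_csSup (hφbdd b.1) ⟨TMS.cons b.1 υ, ⟨hconsX b.1 υ hυ (hMA _ _ b.2), rfl⟩, rfl⟩
  have hXae : ∀ᵐ υ ∂ν, υ ∈ TMS.markovShift A := by
    rw [ae_iff]
    exact hνX
  -- the key vanishing lemma
  have key : ∀ f : (ℕ → S) → ℝ, f ∈ TMS.Cb (TMS.markovShift A) →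
      (∀ υ, 0 ≤ f υ) → (∀ υ, f υ ≤ 1) →
      (∀ᵐ υ ∂ν, TMS.transfer M φ (fun x => 1 - f x) υ
        = TMS.transfer M φ (fun _ => (1 : ℝ)) υ) →
      ν {υ : ℕ → S | f υ ≠ 0} = 0 := by
    intro f hfCb hf0 hf1 hae
    have hgCb : (fun x => 1 - f x) ∈ TMS.Cb (TMS.markovShift A) := by
      refine ⟨continuousOn_const.sub hfCb.1, ⟨1, ?_⟩⟩
      rintro x ⟨υ, -, rfl⟩
      dsimp only
      exact abs_le.2 ⟨by linarith [hf1 υ], by linarith [hf0 υ]⟩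
    have e1 : ∫ ω, TMS.transfer M φ (fun x => 1 - f x) ω ∂ν
        = lam * ∫ ω, (1 - f ω) ∂ν := heig _ hgCb
    have e2 : ∫ ω, TMS.transfer M φ (fun x => 1 - f x) ω ∂ν = lam * m := by
      rw [integral_congr_ae hae, hintL1]
    have e3 : ∫ ω, (1 - f ω) ∂ν = m := mul_left_cancel₀ hlam.ne' (e1.symm.trans e2)
    have hintg : Integrable (fun ω => 1 - f ω) ν := by
      by_contra hc
      rw [integral_undef hc] at e3
      linarith
    have hfint : Integrable f ν := by
      have h := (integrable_const (1 : ℝ)).sub hintg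
      have hEq : ((fun _ : ℕ → S => (1 : ℝ)) - fun ω => 1 - f ω) = f := by
        funext ω
        simp [Pi.sub_apply]
      rwa [hEq] at h
    have e4 : ∫ ω, f ω ∂ν = 0 := by
      rw [integral_sub (integrable_const (1 : ℝ)) hfint, hint1] at e3
      linarith
    have e6 : f =ᵐ[ν] 0 := (integral_eq_zero_iff_of_nonneg hf0 hfint).1 e4
    have e7 : ∀ᵐ υ ∂ν, f υ = 0 := e6
    rw [ae_iff] at e7
    exact e7
  -- continuity of one-coordinate indicators
  have hind1 : ∀ (i : ℕ) (s : S),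
      Continuous (fun υ : ℕ → S => if υ i = s then (1 : ℝ) else 0) := by
    intro i s
    have hEq : (fun υ : ℕ → S => if υ i = s then (1 : ℝ) else 0)
        = (fun t : S => if t = s then (1 : ℝ) else 0) ∘ (fun υ : ℕ → S => υ i) := rfl
    rw [hEq]
    exact continuous_of_discreteTopology.comp (continuous_apply i)
  -- PART 1 : bad-pair cylinders are null
  have part1core : ∀ (n : ℕ) (b c : S), ¬ M b c →
      (∀ᵐ υ ∂ν, TMS.transfer M φ
          (fun x => 1 - (if x n = b then (1 : ℝ) else 0) * (if x (n + 1) = c then (1 : ℝ) else 0)) υ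
        = TMS.transfer M φ (fun _ => (1 : ℝ)) υ) →
      ν {υ : ℕ → S | υ n = b ∧ υ (n + 1) = c} = 0 := by
    intro n b c hbc hae
    have h := key (fun υ => (if υ n = b then (1 : ℝ) else 0) * (if υ (n + 1) = c then (1 : ℝ) else 0))
      ⟨((hind1 n b).mul (hind1 (n + 1) c)).continuousOn,
        ⟨1, by rintro x ⟨υ, -, rfl⟩; dsimp only; split_ifs <;> norm_num⟩⟩
      (fun υ => by split_ifs <;> norm_num)
      (fun υ => by split_ifs <;> norm_num) hae
    refine measure_mono_null ?_ h
    rintro υ ⟨h1, h2⟩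
    simp [h1, h2]
  have part1 : ∀ b c : S, ¬ M b c → ∀ n : ℕ, ν {υ : ℕ → S | υ n = b ∧ υ (n + 1) = c} = 0 := by
    intro b c hbc n
    induction n with
    | zero =>
      apply part1core 0 b c hbc
      apply Filter.Eventually.of_forall
      intro υ
      simp only [TMS.transfer]
      apply tsum_congr
      intro a
      congr 1
      show (1 : ℝ) - (if TMS.cons (a : S) υ 0 = b then (1 : ℝ) else 0)
          * (if TMS.cons (a : S) υ (0 + 1) = c then (1 : ℝ) else 0) = 1
      rw [hcons0, hconsS]
      rcases eq_or_ne (a : S) b with hb | hb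
      · rcases eq_or_ne (υ 0) c with hc | hc
        · exact absurd (hb ▸ hc ▸ a.2) hbc
        · simp [hc]
      · simp [hb]
    | succ n IH =>
      have hIH : ∀ᵐ υ ∂ν, ¬ (υ n = b ∧ υ (n + 1) = c) := by
        rw [ae_iff]
        simpa using IH
      apply part1core (n + 1) b c hbc
      filter_upwards [hIH] with υ hυ
      simp only [TMS.transfer]
      apply tsum_congr
      intro a
      congr 1
      show (1 : ℝ) - (if TMS.cons (a : S) υ (n + 1) = b then (1 : ℝ) else 0)
          * (if TMS.cons (a : S) υ (n + 1 + 1) = c then (1 : ℝ) else 0) = 1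
      rw [hconsS, hconsS]
      rcases not_and_or.mp hυ with h | h
      · simp [h]
      · simp [h]
  -- PART 2 : the peel lemma
  have peel : ∀ ζ : ℕ → S, ζ ∈ TMS.markovShift A → M (ζ 0) (ζ 1) → ∀ len : ℕ, k + 1 ≤ len →
      ν {υ : ℕ → S | ∀ i < len + 1, υ i = ζ i} = 0 →
      ν {υ : ℕ → S | ∀ i < len, υ i = ζ (i + 1)} = 0 := by
    intro ζ hζX hMζ len hlen hnull
    set T : ℝ := Real.exp (C * θ ^ (k + 1) - φ ζ) with hTdef
    have hT : 0 < T := Real.exp_pos _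
    -- lower bound for the weight on the tail cylinder
    have hlow : ∀ υ ∈ TMS.markovShift A, (∀ i < len, υ i = ζ (i + 1)) →
        1 ≤ T * Real.exp (φ (TMS.cons (ζ 0) υ)) := by
      intro υ hυ hag
      have hconsmem : TMS.cons (ζ 0) υ ∈ TMS.markovShift A := by
        apply hconsX _ _ hυ
        rw [hag 0 (by omega)]
        exact hMA _ _ hMζ
      have hagree : ∀ i, i < k + 1 → TMS.cons (ζ 0) υ i = ζ i := by
        intro i hi
        cases i with
        | zero => rfl
        | succ j =>
          rw [hconsS]
          exact hag j (by omega)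
      have habs : |φ (TMS.cons (ζ 0) υ) - φ ζ| ≤ C * θ ^ (k + 1) :=
        hC (k + 1) le_rfl _ hconsmem ζ hζX hagree
      have h1 : φ ζ - C * θ ^ (k + 1) ≤ φ (TMS.cons (ζ 0) υ) := by
        have h2 := abs_le.1 habs
        linarith [h2.1]
      calc (1 : ℝ) = Real.exp 0 := Real.exp_zero.symm
      _ ≤ T * Real.exp (φ (TMS.cons (ζ 0) υ)) := by
          rw [hTdef, ← Real.exp_add]
          apply Real.exp_le_exp.2
          linarith
    -- the test function
    set Ibig : (ℕ → S) → ℝ :=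
      fun υ => ∏ i ∈ Finset.range (len + 1), if υ i = ζ i then (1 : ℝ) else 0 with hIbig
    have hIbig_eq : ∀ υ, Ibig υ = if (∀ i < len + 1, υ i = ζ i) then (1 : ℝ) else 0 := by
      intro υ
      rw [hIbig]
      dsimp only
      rw [Finset.prod_boole]
      simp only [Finset.mem_range]
    have hIbig_cont : Continuous Ibig := by
      rw [hIbig]
      exact continuous_finset_prod _ (fun i _ => hind1 i (ζ i))
    have hIbig01 : ∀ υ, Ibig υ = 0 ∨ Ibig υ = 1 := by
      intro υ
      rw [hIbig_eq]
      split_ifs <;> simp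
    set f : (ℕ → S) → ℝ := fun υ => Ibig υ * min (Real.exp (-φ υ)) T with hfdef
    have hf_nonneg : ∀ υ, 0 ≤ f υ := by
      intro υ
      apply mul_nonneg
      · rcases hIbig01 υ with h | h <;> rw [h] <;> norm_num
      · exact le_min (Real.exp_pos _).le hT.le
    have hf_le : ∀ υ, f υ ≤ T := by
      intro υ
      rw [hfdef]
      dsimp only
      rcases hIbig01 υ with h | h <;> rw [h]
      · rw [zero_mul]; exact hT.le
      · rw [one_mul]; exact min_le_right _ _
    have hfCb : f ∈ TMS.Cb (TMS.markovShift A) := by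
      constructor
      · apply ContinuousOn.mul hIbig_cont.continuousOn
        have h1 : ContinuousOn (fun υ : ℕ → S => Real.exp (-φ υ)) (TMS.markovShift A) :=
          Real.continuous_exp.comp_continuousOn hφC.neg
        exact continuous_min.comp_continuousOn (h1.prodMk continuousOn_const)
      · refine ⟨T, ?_⟩
        rintro x ⟨υ, -, rfl⟩
        dsimp only
        rw [abs_of_nonneg (hf_nonneg υ)]
        exact hf_le υ
    have hf0 : ∀ᵐ υ ∂ν, f υ = 0 := by
      rw [ae_iff]
      apply measure_mono_null _ hnull
      intro υ hυ
      simp only [Set.mem_setOf_eq] at hυ ⊢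
      by_contra hno
      apply hυ
      rw [hfdef]
      dsimp only
      rw [hIbig_eq υ, if_neg hno, zero_mul]
    have hf0' : f =ᵐ[ν] 0 := hf0
    have hfint : Integrable f ν := (integrable_zero _ _ _).congr hf0'.symm
    have hintf : ∫ υ, f υ ∂ν = 0 := by
      rw [integral_congr_ae hf0']
      simp
    have hgCb : (fun υ => T - f υ) ∈ TMS.Cb (TMS.markovShift A) := by
      refine ⟨continuousOn_const.sub hfCb.1, ⟨T, ?_⟩⟩
      rintro x ⟨υ, -, rfl⟩
      dsimp only
      exact abs_le.2 ⟨by linarith [hf_le υ], by linarith [hf_nonneg υ]⟩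
    -- pointwise computation of L f on X
    have hcond : ∀ (a : S) (υ : ℕ → S),
        (∀ i < len + 1, TMS.cons a υ i = ζ i) ↔ (a = ζ 0 ∧ ∀ i < len, υ i = ζ (i + 1)) := by
      intro a υ
      constructor
      · intro h
        refine ⟨h 0 (by omega), fun i hi => ?_⟩
        have := h (i + 1) (by omega)
        rwa [hconsS] at this
      · rintro ⟨h0, h⟩ i hi
        cases i with
        | zero => exact h0
        | succ j =>
          rw [hconsS]
          exact h j (by omega)
    have hLf : ∀ υ ∈ TMS.markovShift A,
        TMS.transfer M φ f υ = if (∀ i < len, υ i = ζ (i + 1)) then (1 : ℝ) else 0 := by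
      intro υ hυ
      by_cases htail : ∀ i < len, υ i = ζ (i + 1)
      · rw [if_pos htail]
        have hM0 : M (ζ 0) (υ 0) := by
          rw [htail 0 (by omega)]
          exact hMζ
        have hone : ∀ b' : {a : S // M a (υ 0)}, b' ≠ ⟨ζ 0, hM0⟩ →
            Real.exp (φ (TMS.cons (b' : S) υ)) * f (TMS.cons (b' : S) υ) = 0 := by
          intro b' hb'
          have hne : (b' : S) ≠ ζ 0 := fun hh => hb' (Subtype.ext hh)
          have hz : Ibig (TMS.cons (b' : S) υ) = 0 := by
            rw [hIbig_eq, if_neg]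
            intro hforall
            exact hne ((hcond _ _).1 hforall).1
          rw [hfdef]
          dsimp only
          rw [hz, zero_mul, mul_zero]
        simp only [TMS.transfer]
        rw [tsum_eq_single (⟨ζ 0, hM0⟩ : {a : S // M a (υ 0)}) hone]
        have hIb1 : Ibig (TMS.cons (ζ 0) υ) = 1 := by
          rw [hIbig_eq, if_pos ((hcond _ _).2 ⟨rfl, htail⟩)]
        rw [hfdef]
        dsimp only
        rw [hIb1, one_mul]
        have hmm : Real.exp (φ (TMS.cons (ζ 0) υ)) * min (Real.exp (-φ (TMS.cons (ζ 0) υ))) T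
            = min 1 (Real.exp (φ (TMS.cons (ζ 0) υ)) * T) := by
          rw [mul_min_of_nonneg _ _ (Real.exp_pos _).le, ← Real.exp_add]
          simp
        rw [hmm]
        apply min_eq_left
        have := hlow υ hυ htail
        nlinarith [Real.exp_pos (φ (TMS.cons (ζ 0) υ))]
      · rw [if_neg htail]
        simp only [TMS.transfer]
        have hz : ∀ b' : {a : S // M a (υ 0)},
            Real.exp (φ (TMS.cons (b' : S) υ)) * f (TMS.cons (b' : S) υ) = 0 := by
          intro b'
          have hzz : Ibig (TMS.cons (b' : S) υ) = 0 := by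
            rw [hIbig_eq, if_neg]
            intro hforall
            exact htail ((hcond _ _).1 hforall).2
          rw [hfdef]
          dsimp only
          rw [hzz, zero_mul, mul_zero]
        rw [tsum_congr hz, tsum_zero]
    -- pointwise computation of L (T - f) on X
    have hLg : ∀ υ ∈ TMS.markovShift A,
        TMS.transfer M φ (fun x => T - f x) υ
          = T * TMS.transfer M φ (fun _ => (1 : ℝ)) υ - TMS.transfer M φ f υ := by
      intro υ hυ
      have hs1 : Summable (fun a : {a : S // M a (υ 0)} =>
          Real.exp (φ (TMS.cons (a : S) υ)) * T) := (hsum υ hυ).mul_right T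
      have hs2 : Summable (fun a : {a : S // M a (υ 0)} =>
          Real.exp (φ (TMS.cons (a : S) υ)) * f (TMS.cons (a : S) υ)) := by
        apply Summable.of_nonneg_of_le _ _ hs1
        · intro a
          exact mul_nonneg (Real.exp_pos _).le (hf_nonneg _)
        · intro a
          exact mul_le_mul_of_nonneg_left (hf_le _) (Real.exp_pos _).le
      simp only [TMS.transfer]
      have hsplit : ∀ a : {a : S // M a (υ 0)},
          Real.exp (φ (TMS.cons (a : S) υ)) * (T - f (TMS.cons (a : S) υ))
            = Real.exp (φ (TMS.cons (a : S) υ)) * T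
              - Real.exp (φ (TMS.cons (a : S) υ)) * f (TMS.cons (a : S) υ) := by
        intro a
        ring
      rw [tsum_congr hsplit, hs1.tsum_sub hs2, tsum_mul_right]
      congr 1
      rw [mul_comm]
      congr 1
      apply tsum_congr
      intro a
      rw [mul_one]
    -- the a.e. identity and the conclusion
    set J : (ℕ → S) → ℝ := fun υ => if (∀ i < len, υ i = ζ (i + 1)) then (1 : ℝ) else 0 with hJ
    have haeg : (fun υ => TMS.transfer M φ (fun x => T - f x) υ) =ᵐ[ν]
        (fun υ => T * TMS.transfer M φ (fun _ => (1 : ℝ)) υ - J υ) := by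
      filter_upwards [hXae] with υ hυ
      rw [hLg υ hυ, hLf υ hυ]
    have e1 : ∫ υ, TMS.transfer M φ (fun x => T - f x) υ ∂ν = lam * (T * m) := by
      rw [heig _ hgCb]
      congr 1
      rw [integral_sub (integrable_const T) hfint, hintf, integral_const, smul_eq_mul, sub_zero,
        mul_comm]
      rfl
    have e2 : ∫ υ, (T * TMS.transfer M φ (fun _ => (1 : ℝ)) υ - J υ) ∂ν = lam * (T * m) := by
      rw [← integral_congr_ae haeg]
      exact e1
    have hbig_int : Integrable (fun υ => T * TMS.transfer M φ (fun _ => (1 : ℝ)) υ - J υ) ν := by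
      by_contra hc
      rw [integral_undef hc] at e2
      have := mul_pos hlam (mul_pos hT hm)
      linarith
    have hTL1int : Integrable (fun υ => T * TMS.transfer M φ (fun _ => (1 : ℝ)) υ) ν :=
      hL1int.const_mul T
    have hJint : Integrable J ν := by
      have h := hTL1int.sub hbig_int
      have hEq : ((fun υ => T * TMS.transfer M φ (fun _ => (1 : ℝ)) υ)
          - fun υ => T * TMS.transfer M φ (fun _ => (1 : ℝ)) υ - J υ) = J := by
        funext υ
        simp [Pi.sub_apply]
      rwa [hEq] at h
    have e3 : ∫ υ, J υ ∂ν = 0 := by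
      rw [integral_sub hTL1int hJint, integral_const_mul, hintL1] at e2
      nlinarith [e2]
    have hJ0 : J =ᵐ[ν] 0 := by
      apply (integral_eq_zero_iff_of_nonneg _ hJint).1 e3
      intro υ
      rw [hJ]
      dsimp only
      split_ifs <;> norm_num
    have hJnull : ν {υ : ℕ → S | ¬ J υ = 0} = 0 := by
      have h : ∀ᵐ υ ∂ν, J υ = 0 := hJ0
      rwa [ae_iff] at h
    apply measure_mono_null _ hJnull
    intro υ hυ
    simp only [Set.mem_setOf_eq] at hυ ⊢
    rw [hJ]
    dsimp only
    rw [if_pos hυ]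
    norm_num
  -- null set of non-M points
  have hMnull : ν (TMS.markovShift M)ᶜ = 0 := by
    have hcover : (TMS.markovShift M)ᶜ ⊆
        ⋃ p : ℕ × S × S, {υ : ℕ → S | υ p.1 = p.2.1 ∧ υ (p.1 + 1) = p.2.2 ∧ ¬ M p.2.1 p.2.2} := by
      intro υ hυ
      simp only [TMS.markovShift, Set.mem_compl_iff, Set.mem_setOf_eq, not_forall] at hυ
      obtain ⟨j, hj⟩ := hυ
      exact Set.mem_iUnion.2 ⟨⟨j, υ j, υ (j + 1)⟩, rfl, rfl, hj⟩
    apply measure_mono_null hcover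
    apply measure_iUnion_null
    rintro ⟨j, b, c⟩
    by_cases hbc : M b c
    · have hempty : {υ : ℕ → S | υ j = b ∧ υ (j + 1) = c ∧ ¬ M b c} = ∅ := by
        ext υ
        simp [hbc]
      simp [hempty]
    · apply measure_mono_null _ (part1 b c hbc j)
      rintro υ ⟨h1, h2, -⟩
      exact ⟨h1, h2⟩
  -- PART 2 : positivity of M-cylinders
  have part2 : ∀ ω ∈ TMS.markovShift M, ∀ n : ℕ, 0 < ν {υ : ℕ → S | ∀ i < n, υ i = ω i} := by
    intro ω hω n
    have hsub : {υ : ℕ → S | ∀ i < max n (k + 1), υ i = ω i} ⊆ {υ | ∀ i < n, υ i = ω i} :=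
      fun υ hυ i hi => hυ i (lt_of_lt_of_le hi (le_max_left _ _))
    refine lt_of_lt_of_le ?_ (measure_mono hsub)
    set n' := max n (k + 1) with hn'
    by_contra h0'
    rw [not_lt, nonpos_iff_eq_zero] at h0'
    -- the seed cylinder
    have hseed : ∃ vv ∈ TMS.markovShift M, 0 < ν {υ : ℕ → S | ∀ i < k + 1, υ i = vv i} := by
      by_contra hno
      push_neg at hno
      simp only [nonpos_iff_eq_zero] at hno
      have hall : ∀ u : Fin (k + 1) → S,
          ν {υ : ℕ → S | υ ∈ TMS.markovShift M ∧ ∀ i : Fin (k + 1), υ (i : ℕ) = u i} = 0 := by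
        intro u
        by_cases hne : ({υ : ℕ → S | υ ∈ TMS.markovShift M ∧
            ∀ i : Fin (k + 1), υ (i : ℕ) = u i}).Nonempty
        · obtain ⟨vv, hvvM, hvvu⟩ := hne
          have h1' := hno vv hvvM
          apply measure_mono_null _ h1'
          rintro υ ⟨hυM, hυu⟩ i hi
          exact (hυu ⟨i, hi⟩).trans (hvvu ⟨i, hi⟩).symm
        · rw [Set.not_nonempty_iff_eq_empty] at hne
          simp [hne]
      have hcover : (Set.univ : Set (ℕ → S)) ⊆
          (⋃ u : Fin (k + 1) → S, {υ : ℕ → S | υ ∈ TMS.markovShift M ∧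
            ∀ i : Fin (k + 1), υ (i : ℕ) = u i}) ∪ (TMS.markovShift M)ᶜ := by
        intro υ _
        by_cases hυ : υ ∈ TMS.markovShift M
        · exact Or.inl (Set.mem_iUnion.2 ⟨fun i => υ (i : ℕ), hυ, fun i => rfl⟩)
        · exact Or.inr hυ
      have huniv : ν Set.univ = 0 := by
        apply measure_mono_null hcover
        exact measure_union_null (measure_iUnion_null hall) hMnull
      exact hν0 (Measure.measure_univ_eq_zero.1 huniv)
    obtain ⟨vv, hvvM, hvvpos⟩ := hseed
    -- connect ω's prefix to the seed
    have ha' : ω (n' - 1) ∈ S0 := (hMS0 _ _ (hω (n' - 1))).1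
    have hb' : vv 0 ∈ S0 := (hMS0 _ _ (hvvM 0)).1
    obtain ⟨l, hlchain⟩ := hirr _ ha' _ hb'
    obtain ⟨P, q, hP, hq0, hqP, hqc⟩ := stmt9_chain_to_fun M l (ω (n' - 1)) (vv 0) hlchain
    have hn'pos : 0 < n' := lt_of_lt_of_le (by omega) (le_max_right n (k + 1))
    obtain ⟨ξ, hξpre, hξchain, hξtail⟩ :=
      stmt9_splice M ω n' hn'pos (fun i hi => hω i) P q hP hq0 hqc vv (fun i => hvvM i) hqP
    set r := n' - 1 + P with hr
    have hξX : ξ ∈ TMS.markovShift A := fun i => hMA _ _ (hξchain i)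
    -- peel the connection off, one symbol at a time
    have hQ : ∀ j, j ≤ r → ν {υ : ℕ → S | ∀ i < r + (k + 1) - j, υ i = ξ (j + i)} = 0 := by
      intro j
      induction j with
      | zero =>
        intro _
        apply measure_mono_null _ h0'
        intro υ hυ
        simp only [Set.mem_setOf_eq] at hυ ⊢
        intro i hi
        have h1 : i < r + (k + 1) - 0 := by omega
        have h2 := hυ i h1
        rw [Nat.zero_add] at h2
        rw [h2, hξpre i hi]
      | succ j ih =>
        intro hj
        have hprev := ih (by omega)
        have hζX : (fun i => ξ (j + i)) ∈ TMS.markovShift A := fun i => hξX (j + i)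
        have hζM : M ((fun i => ξ (j + i)) 0) ((fun i => ξ (j + i)) 1) := by
          simpa using hξchain j
        have hlen1 : (r + (k + 1) - (j + 1)) + 1 = r + (k + 1) - j := by omega
        have hinput : ν {υ : ℕ → S | ∀ i < (r + (k + 1) - (j + 1)) + 1,
            υ i = (fun i => ξ (j + i)) i} = 0 := by
          rw [hlen1]
          exact hprev
        have hout := peel (fun i => ξ (j + i)) hζX hζM (r + (k + 1) - (j + 1)) (by omega) hinput
        have hseteq : {υ : ℕ → S | ∀ i < r + (k + 1) - (j + 1), υ i = ξ (j + 1 + i)}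
            = {υ : ℕ → S | ∀ i < r + (k + 1) - (j + 1), υ i = (fun i => ξ (j + i)) (i + 1)} := by
          ext υ
          simp only [Set.mem_setOf_eq]
          constructor
          · intro h i hi
            rw [show j + (i + 1) = j + 1 + i by omega]
            exact h i hi
          · intro h i hi
            have := h i hi
            rwa [show j + (i + 1) = j + 1 + i by omega] at this
        rw [hseteq]
        exact hout
    have hfinal := hQ r le_rfl
    have hseteq2 : {υ : ℕ → S | ∀ i < k + 1, υ i = vv i}
        = {υ : ℕ → S | ∀ i < r + (k + 1) - r, υ i = ξ (r + i)} := by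
      have harr : r + (k + 1) - r = k + 1 := by omega
      ext υ
      simp only [Set.mem_setOf_eq, harr]
      constructor
      · intro h i hi
        rw [hξtail i]
        exact h i hi
      · intro h i hi
        have := h i hi
        rwa [hξtail i] at this
    rw [hseteq2, hfinal] at hvvpos
    exact lt_irrefl 0 hvvpos
  -- conclusion
  apply Set.Subset.antisymm
  · intro ω hωsup
    by_contra hωM
    have hex : ∃ j, ¬ M (ω j) (ω (j + 1)) := by
      by_contra hall
      push_neg at hall
      exact hωM hall
    obtain ⟨j, hj⟩ := hex
    have hUopen : IsOpen {υ : ℕ → S | υ j = ω j ∧ υ (j + 1) = ω (j + 1)} := by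
      have hEq : {υ : ℕ → S | υ j = ω j ∧ υ (j + 1) = ω (j + 1)}
          = (fun υ : ℕ → S => υ j) ⁻¹' {ω j} ∩ (fun υ : ℕ → S => υ (j + 1)) ⁻¹' {ω (j + 1)} := rfl
      rw [hEq]
      exact ((continuous_apply j).isOpen_preimage _ (isOpen_discrete _)).inter
        ((continuous_apply (j + 1)).isOpen_preimage _ (isOpen_discrete _))
    have hpos := hωsup _ hUopen ⟨rfl, rfl⟩
    rw [part1 (ω j) (ω (j + 1)) hj j] at hpos
    exact lt_irrefl 0 hpos
  · intro ω hωM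
    intro U hU hωU
    obtain ⟨I, u, hu, hsubU⟩ := isOpen_pi_iff.1 hU ω hωU
    have hcyl : {υ : ℕ → S | ∀ i < (I.sup id) + 1, υ i = ω i} ⊆ U := by
      intro υ hυ
      apply hsubU
      rw [Set.mem_pi]
      intro i hi
      have hiI : i ∈ I := hi
      have hile : i ≤ I.sup id := Finset.le_sup (f := id) hiI
      rw [hυ i (by omega)]
      exact (hu i hiI).2
    exact lt_of_lt_of_le (part2 ω hωM ((I.sup id) + 1)) (measure_mono hcyl)
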